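/- Binary search case 1: let S₁,…,S_k (all containing s) be the global minimum cut-sets of G' under [w, w_s], let T_i = V∖S_i, let 𝒯 = ∪_i T_i with maximum element t_max (vertices identified with {1,…,n}). Define w_s^{<x}(e) = 1 if e = (s,v) with v < x, else 0, and the triple-stitched weight [w, w_s, w_s^{<x}]. If x > t_max, then every cut-set S containing s that minimizes [w, w_s, w_s^{<x}](cut(·)) over nonempty proper subsets satisfies w_s^{<x}(cut(S)) = |V∖S|. -/

import Mathlib

open Finset
open scoped Classical

/-- The weight of the cut induced by `S`. -/
noncomputable def cutWeight {V : Type*} (E : Finset (Sym2 V)) (w : Sym2 V → ℕ)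
    (S : Finset V) : ℕ :=
  ∑ e ∈ E.filter (fun e => (∃ u ∈ e, u ∈ S) ∧ ∃ u ∈ e, u ∉ S), w e

/-- Indicator weight of edges incident to `s` (the star at `s`). -/
noncomputable def starWeight {V : Type*} (s : V) : Sym2 V → ℕ :=
  fun e => if s ∈ e then 1 else 0

/-- Indicator weight of star edges `(s, v)` with `v < x`. -/
noncomputable def ltWeight {V : Type*} [LT V] (s x : V) : Sym2 V → ℕ :=
  fun e => if ∃ v : V, v < x ∧ e = Sym2.mk s v then 1 else 0

/-- `S` is a global minimum cut-set of `(V, E)` with respect to the weights `f`. -/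
def IsMinCutSet {V : Type*} [Fintype V] (E : Finset (Sym2 V)) (f : Sym2 V → ℕ)
    (S : Finset V) : Prop :=
  S.Nonempty ∧ S ≠ Finset.univ ∧ ∀ T : Finset V, T.Nonempty → T ≠ Finset.univ →
    cutWeight E f S ≤ cutWeight E f T

/-- The stitched weight `[w, w_s]` (with bound `n = |V|`). -/
noncomputable def stitch1 {V : Type*} [Fintype V] (w : Sym2 V → ℕ) (s : V) :
    Sym2 V → ℕ :=
  fun e => (Fintype.card V + 1) * w e + starWeight s e

/-- The triple-stitched weight `[w, w_s, w_s^{<x}]` (with bound `n = |V|`). -/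
noncomputable def stitch2 {V : Type*} [Fintype V] [LT V] (w : Sym2 V → ℕ) (s x : V) :
    Sym2 V → ℕ :=
  fun e => (Fintype.card V + 1) * stitch1 w s e + ltWeight s x e


lemma cutWeight_linear {V : Type*} (E : Finset (Sym2 V)) (f g : Sym2 V → ℕ) (a : ℕ)
    (S : Finset V) :
    cutWeight E (fun e => a * f e + g e) S = a * cutWeight E f S + cutWeight E g S := by
  simp [cutWeight, Finset.sum_add_distrib, Finset.mul_sum]

lemma ltWeight_cut_le {n : ℕ} (E : Finset (Sym2 (Fin n))) (s x : Fin n)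
    (T : Finset (Fin n)) : cutWeight E (ltWeight s x) T ≤ n := by
  classical
  have h1 : cutWeight E (ltWeight s x) T =
      ((E.filter (fun e => (∃ u ∈ e, u ∈ T) ∧ ∃ u ∈ e, u ∉ T)).filter
        (fun e => ∃ v : Fin n, v < x ∧ e = Sym2.mk s v)).card := by
    rw [cutWeight, Finset.card_filter]
    congr 1
    · exact Finset.filter_congr_decidable _ _ _
    · funext e
      simp [ltWeight]
  have h2 : ((E.filter (fun e => (∃ u ∈ e, u ∈ T) ∧ ∃ u ∈ e, u ∉ T)).filter
        (fun e => ∃ v : Fin n, v < x ∧ e = Sym2.mk s v)) ⊆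
      Finset.univ.image (fun v : Fin n => Sym2.mk s v) := by
    intro e he
    simp only [Finset.mem_filter] at he
    obtain ⟨_, v, _, rfl⟩ := he
    simp
  calc cutWeight E (ltWeight s x) T
      ≤ (Finset.univ.image (fun v : Fin n => Sym2.mk s v)).card := by
        rw [h1]; exact Finset.card_le_card h2
    _ ≤ (Finset.univ : Finset (Fin n)).card := Finset.card_image_le
    _ = n := by simp

lemma nat_lex_le {n a b ls lt : ℕ} (h : (n + 1) * a + ls ≤ (n + 1) * b + lt)
    (hlt : lt ≤ n) : a ≤ b := by
  by_contra hab
  push_neg at hab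
  have h2 : (n + 1) * (b + 1) ≤ (n + 1) * a := Nat.mul_le_mul_left _ hab
  rw [Nat.mul_add, Nat.mul_one] at h2
  omega

lemma mincut_stitch2_stitch1 {n : ℕ} (E : Finset (Sym2 (Fin n)))
    (w : Sym2 (Fin n) → ℕ) (s x : Fin n) (S : Finset (Fin n))
    (h : IsMinCutSet E (stitch2 w s x) S) : IsMinCutSet E (stitch1 w s) S := by
  obtain ⟨hne, hnu, hmin⟩ := h
  refine ⟨hne, hnu, fun T hT1 hT2 => ?_⟩
  have h2 := hmin T hT1 hT2
  have key : stitch2 w s x = fun e => (n + 1) * stitch1 w s e + ltWeight s x e := by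
    funext e; simp [stitch2, Fintype.card_fin]
  have eS : cutWeight E (stitch2 w s x) S =
      (n + 1) * cutWeight E (stitch1 w s) S + cutWeight E (ltWeight s x) S := by
    rw [key]; exact cutWeight_linear E (stitch1 w s) (ltWeight s x) (n + 1) S
  have eT : cutWeight E (stitch2 w s x) T =
      (n + 1) * cutWeight E (stitch1 w s) T + cutWeight E (ltWeight s x) T := by
    rw [key]; exact cutWeight_linear E (stitch1 w s) (ltWeight s x) (n + 1) T
  rw [eS, eT] at h2
  exact nat_lex_le h2 (ltWeight_cut_le E s x T)

/-- Binary search, case 1: if x exceeds every vertex separated from s by some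
global minimum cut (under the stitched weights), then every minimizer S (with s ∈ S) of the
triple-stitched cut weight satisfies w_s^{<x}(cut(S)) = |V ∖ S|. -/
theorem binary_search_case_one (n : ℕ) (E : Finset (Sym2 (Fin n)))
    (w : Sym2 (Fin n) → ℕ) (s : Fin n)
    (hstar : ∀ v : Fin n, v ≠ s → Sym2.mk s v ∈ E) (x : Fin n)
    (hx : ∀ t : Fin n,
      (∃ S : Finset (Fin n), s ∈ S ∧ IsMinCutSet E (stitch1 w s) S ∧ t ∉ S) → t < x) :
    ∀ S : Finset (Fin n), s ∈ S → IsMinCutSet E (stitch2 w s x) S →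
      cutWeight E (ltWeight s x) S = (Finset.univ \ S).card := by
  intro S hsS hmin
  classical
  have h1 : IsMinCutSet E (stitch1 w s) S := mincut_stitch2_stitch1 E w s x S hmin
  have hlt : ∀ v : Fin n, v ∉ S → v < x := fun v hv => hx v ⟨S, hsS, h1, hv⟩
  have hset : ((E.filter (fun e => (∃ u ∈ e, u ∈ S) ∧ ∃ u ∈ e, u ∉ S)).filter
        (fun e => ∃ v : Fin n, v < x ∧ e = Sym2.mk s v)) =
      (Finset.univ \ S).image (fun v : Fin n => Sym2.mk s v) := by
    ext e
    simp only [Finset.mem_filter, Finset.mem_image, Finset.mem_sdiff, Finset.mem_univ,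
      true_and]
    constructor
    · rintro ⟨⟨-, -, u, hu, huS⟩, v, hvx, rfl⟩
      rw [Sym2.mem_iff] at hu
      rcases hu with rfl | rfl
      · exact absurd hsS huS
      · exact ⟨u, huS, rfl⟩
    · rintro ⟨v, hvS, rfl⟩
      have hvs : v ≠ s := fun h => hvS (h ▸ hsS)
      refine ⟨⟨hstar v hvs, ⟨s, ?_, hsS⟩, ⟨v, ?_, hvS⟩⟩, v, hlt v hvS, rfl⟩
      · simp
      · simp
  have hcw : cutWeight E (ltWeight s x) S =
      ((E.filter (fun e => (∃ u ∈ e, u ∈ S) ∧ ∃ u ∈ e, u ∉ S)).filter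
        (fun e => ∃ v : Fin n, v < x ∧ e = Sym2.mk s v)).card := by
    rw [cutWeight, Finset.card_filter]
    congr 1
    · exact Finset.filter_congr_decidable _ _ _
    · funext e
      simp [ltWeight]
  rw [hcw, hset]
  apply Finset.card_image_of_injOn
  intro a ha b hb hab
  simp only [Finset.mem_coe, Finset.mem_sdiff] at ha hb
  have has : a ≠ s := fun h => ha.2 (h ▸ hsS)
  have hbs : b ≠ s := fun h => hb.2 (h ▸ hsS)
  rw [Sym2.eq_iff] at hab
  rcases hab with ⟨-, h⟩ | ⟨h1, h2⟩
  · exact h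
  · exact absurd h2 has
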